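/- Let R be a commutative ring, n a natural number, E the exterior algebra of Fin n → R with ordered basis products v_I, and suppose hB is an R-basis of E indexed by Finset (Fin n) with hB(I) = v_I for every I. Let π : E → R be the coordinate functional of hB at the index univ. Then for all families of coefficients α, β : Finset (Fin n) → R, π( reverse(Σ_I α_I • v_I) · (Σ_J β_J • v_J) ) = Σ_I (−1)^(Σ_{i ∈ I} i) · α_I · β_{Iᶜ}. -/

import Mathlib

open CliffordAlgebra

/-- The ordered basis product `v_I` in the exterior algebra of `Fin n → R`, realized as the
Clifford algebra of the zero quadratic form: the product, in increasing order of indices,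
of the generators `ι (Pi.single i 1)` for `i ∈ I`. -/
noncomputable def vI {R : Type*} [CommRing R] {n : ℕ} (I : Finset (Fin n)) :
    CliffordAlgebra (0 : QuadraticForm R (Fin n → R)) :=
  ((I.sort (· ≤ ·)).map fun i =>
    CliffordAlgebra.ι (0 : QuadraticForm R (Fin n → R)) (Pi.single i (1 : R))).prod

section Aux

variable (R : Type*) [CommRing R] {n : ℕ}

/-- the `i`-th generator -/
noncomputable def gg (i : Fin n) : CliffordAlgebra (0 : QuadraticForm R (Fin n → R)) :=
  CliffordAlgebra.ι (0 : QuadraticForm R (Fin n → R)) (Pi.single i (1 : R))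

/-- product of generators along a list -/
noncomputable def vL (l : List (Fin n)) : CliffordAlgebra (0 : QuadraticForm R (Fin n → R)) :=
  (l.map (gg R)).prod

variable {R}

lemma vI_eq (I : Finset (Fin n)) : vI I = vL R (I.sort (· ≤ ·)) := rfl

@[simp] lemma vL_nil : vL R ([] : List (Fin n)) = 1 := rfl

@[simp] lemma vL_cons (i : Fin n) (l : List (Fin n)) :
    vL R (i :: l) = gg R i * vL R l := by simp [vL]

@[simp] lemma vL_append (l₁ l₂ : List (Fin n)) :
    vL R (l₁ ++ l₂) = vL R l₁ * vL R l₂ := by simp [vL]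

lemma gg_mul_self (i : Fin n) : gg R i * gg R i = 0 := by
  simp [gg, CliffordAlgebra.ι_sq_scalar]

lemma gg_anticomm (i j : Fin n) : gg R i * gg R j = -(gg R j * gg R i) := by
  have h := CliffordAlgebra.ι_mul_ι_add_swap (Q := (0 : QuadraticForm R (Fin n → R)))
    (Pi.single i (1 : R)) (Pi.single j (1 : R))
  simp only [QuadraticMap.polar, QuadraticMap.zero_apply, sub_zero, map_zero] at h
  rw [eq_neg_iff_add_eq_zero]
  simpa [gg] using h

lemma gg_mul_vL (i : Fin n) (l : List (Fin n)) :
    gg R i * vL R l = ((-1 : R) ^ l.length) • (vL R l * gg R i) := by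
  induction l with
  | nil => simp
  | cons a l ih =>
    rw [vL_cons, ← mul_assoc, gg_anticomm, neg_mul, mul_assoc, ih, mul_smul_comm, List.length_cons, pow_succ,
      mul_neg_one, neg_smul, ← mul_assoc]

lemma vI_insert_min {i : Fin n} {I : Finset (Fin n)} (h : ∀ j ∈ I, i ≤ j) (hi : i ∉ I) :
    vI (insert i I) = gg R i * vI I := by
  rw [vI_eq, vI_eq, Finset.sort_insert _ h hi, vL_cons]

lemma gg_mul_vI {i : Fin n} {I : Finset (Fin n)} (hi : i ∉ I) :
    gg R i * vI I = ((-1 : R) ^ (I.filter (· < i)).card) • vI (insert i I) := by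
  induction I using Finset.strongInduction with
  | _ I ih =>
    rcases I.eq_empty_or_nonempty with rfl | hne
    · rw [show insert i (∅ : Finset (Fin n)) = {i} from rfl]
      simp only [Finset.filter_empty, Finset.card_empty, pow_zero, one_smul, vI_eq,
        Finset.sort_empty, Finset.sort_singleton]
      simp [vL]
    · set m := I.min' hne with hm
      have hmI : m ∈ I := I.min'_mem hne
      by_cases him : i ≤ m
      · have hlt : ∀ j ∈ I, i ≤ j := fun j hj => le_trans him (I.min'_le j hj)
        have : I.filter (· < i) = ∅ := by
          apply Finset.filter_eq_empty_iff.2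
          intro j hj
          exact not_lt.2 (hlt j hj)
        rw [this, vI_insert_min hlt hi]
        simp
      · push_neg at him
        set I' := I.erase m with hI'
        have hsub : I' ⊂ I := Finset.erase_ssubset hmI
        have hiI' : i ∉ I' := fun h => hi (Finset.mem_of_mem_erase h)
        have hmin' : ∀ j ∈ I', m ≤ j := fun j hj => I.min'_le j (Finset.mem_of_mem_erase hj)
        have hmI' : m ∉ I' := Finset.notMem_erase m I
        have hIdecomp : I = insert m I' := by
          rw [hI', Finset.insert_erase hmI]
        conv_lhs => rw [hIdecomp, vI_insert_min hmin' hmI']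
        rw [← mul_assoc, gg_anticomm, neg_mul, mul_assoc, ih I' hsub hiI']
        have hmiI' : m ∉ insert i I' := by
          simp only [Finset.mem_insert]
          rintro (rfl | h)
          · exact absurd him (lt_irrefl _)
          · exact hmI' h
        have hminii : ∀ j ∈ insert i I', m ≤ j := by
          intro j hj
          rcases Finset.mem_insert.1 hj with rfl | hj
          · exact le_of_lt him
          · exact hmin' j hj
        rw [mul_smul_comm, ← vI_insert_min hminii hmiI']
        have h1 : insert m (insert i I') = insert i I := by
          rw [Finset.insert_comm, ← hIdecomp]
        have h2 : (I.filter (· < i)).card = (I'.filter (· < i)).card + 1 := by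
          rw [hIdecomp, Finset.filter_insert, if_pos him, Finset.card_insert_of_notMem]
          simp [hmI']
        rw [h1, h2, pow_succ, mul_neg_one, neg_smul]

lemma neg_one_pow_smul_neg_one_pow_smul (k : ℕ)
    (x : CliffordAlgebra (0 : QuadraticForm R (Fin n → R))) :
    ((-1 : R) ^ k) • ((-1 : R) ^ k) • x = x := by
  rw [smul_smul, ← pow_add, Even.neg_one_pow ⟨k, rfl⟩, one_smul]

lemma vI_empty : vI (∅ : Finset (Fin n)) = (1 : CliffordAlgebra (0 : QuadraticForm R (Fin n → R))) := by
  simp [vI_eq, Finset.sort_empty, vL]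

lemma vL_mul_gg (i : Fin n) (l : List (Fin n)) :
    vL R l * gg R i = ((-1 : R) ^ l.length) • (gg R i * vL R l) := by
  conv_rhs => rw [gg_mul_vL]
  rw [neg_one_pow_smul_neg_one_pow_smul]

lemma vI_mul_gg_self {i : Fin n} {I : Finset (Fin n)} (hi : i ∈ I) :
    vI I * gg R i = 0 := by
  have h1 := gg_mul_vI (R := R) (Finset.notMem_erase i I)
  rw [Finset.insert_erase hi] at h1
  have h2 : vI I = ((-1 : R) ^ ((I.erase i).filter (· < i)).card) •
      (gg R i * vI (I.erase i)) := by
    rw [h1, neg_one_pow_smul_neg_one_pow_smul]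
  rw [h2, smul_mul_assoc, mul_assoc, vI_eq, vL_mul_gg, mul_smul_comm, ← mul_assoc,
    gg_mul_self, zero_mul, smul_zero, smul_zero]

lemma vI_mul_vI_of_mem {i : Fin n} {I J : Finset (Fin n)} (hiI : i ∈ I) (hiJ : i ∈ J) :
    vI I * (vI J : CliffordAlgebra (0 : QuadraticForm R (Fin n → R))) = 0 := by
  have h1 := gg_mul_vI (R := R) (Finset.notMem_erase i J)
  rw [Finset.insert_erase hiJ] at h1
  have h2 : vI J = ((-1 : R) ^ ((J.erase i).filter (· < i)).card) •
      (gg R i * vI (J.erase i)) := by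
    rw [h1, neg_one_pow_smul_neg_one_pow_smul]
  rw [h2, mul_smul_comm, ← mul_assoc, vI_mul_gg_self hiI, zero_mul, smul_zero]

lemma vI_mul_vI_disjoint {I J : Finset (Fin n)} (h : Disjoint I J) :
    ∃ c : R, vI I * vI J = c • (vI (I ∪ J) :
      CliffordAlgebra (0 : QuadraticForm R (Fin n → R))) := by
  induction I using Finset.strongInduction with
  | _ I ih =>
    rcases I.eq_empty_or_nonempty with rfl | hne
    · exact ⟨1, by rw [vI_empty, one_mul, Finset.empty_union, one_smul]⟩
    · set m := I.min' hne with hm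
      have hmI : m ∈ I := I.min'_mem hne
      set I' := I.erase m with hI'
      have hsub : I' ⊂ I := Finset.erase_ssubset hmI
      have hmI' : m ∉ I' := Finset.notMem_erase m I
      have hmin' : ∀ j ∈ I', m ≤ j := fun j hj => I.min'_le j (Finset.mem_of_mem_erase hj)
      have hIdecomp : I = insert m I' := by rw [hI', Finset.insert_erase hmI]
      have hd' : Disjoint I' J := Finset.disjoint_of_subset_left (Finset.erase_subset m I) h
      obtain ⟨c, hc⟩ := ih I' hsub hd'
      have hmJ : m ∉ J := Finset.disjoint_left.1 h hmI
      have hmIJ : m ∉ I' ∪ J := by simp [hmI', hmJ]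
      refine ⟨c * (-1 : R) ^ (((I' ∪ J)).filter (· < m)).card, ?_⟩
      conv_lhs => rw [hIdecomp, vI_insert_min hmin' hmI']
      rw [mul_assoc, hc, mul_smul_comm, gg_mul_vI hmIJ, smul_smul]
      congr 1
      rw [hIdecomp, Finset.insert_union]

lemma reverse_gg (i : Fin n) : reverse (gg R i) = gg R i := by
  simp [gg, reverse_ι]

lemma reverse_vI_exists (I : Finset (Fin n)) :
    ∃ c : R, reverse (vI I) = c • (vI I :
      CliffordAlgebra (0 : QuadraticForm R (Fin n → R))) := by
  induction I using Finset.strongInduction with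
  | _ I ih =>
    rcases I.eq_empty_or_nonempty with rfl | hne
    · exact ⟨1, by rw [vI_empty, reverse.map_one, one_smul]⟩
    · set m := I.min' hne with hm
      have hmI : m ∈ I := I.min'_mem hne
      set I' := I.erase m with hI'
      have hsub : I' ⊂ I := Finset.erase_ssubset hmI
      have hmI' : m ∉ I' := Finset.notMem_erase m I
      have hmin' : ∀ j ∈ I', m ≤ j := fun j hj => I.min'_le j (Finset.mem_of_mem_erase hj)
      have hIdecomp : I = insert m I' := by rw [hI', Finset.insert_erase hmI]
      obtain ⟨c, hc⟩ := ih I' hsub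
      have hvI : vI I = gg R m * vI I' := by
        conv_lhs => rw [hIdecomp]
        rw [vI_insert_min hmin' hmI']
      refine ⟨c * (-1 : R) ^ (I'.sort (· ≤ ·)).length, ?_⟩
      rw [hvI, reverse.map_mul, reverse_gg, hc, smul_mul_assoc]
      conv_lhs => rw [vI_eq, vL_mul_gg, ← vI_eq]
      rw [← hvI, smul_smul]

lemma reverse_vI_mul_vI_compl (I : Finset (Fin n)) :
    reverse (vI I) * vI Iᶜ = ((-1 : R) ^ (∑ i ∈ I, (i : ℕ))) •
      (vI (Finset.univ) : CliffordAlgebra (0 : QuadraticForm R (Fin n → R))) := by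
  induction I using Finset.strongInduction with
  | _ I ih =>
    rcases I.eq_empty_or_nonempty with rfl | hne
    · rw [vI_empty, reverse.map_one, one_mul, Finset.compl_empty, Finset.sum_empty, pow_zero,
        one_smul]
    · set m := I.min' hne with hm
      have hmI : m ∈ I := I.min'_mem hne
      set I' := I.erase m with hI'
      have hsub : I' ⊂ I := Finset.erase_ssubset hmI
      have hmI' : m ∉ I' := Finset.notMem_erase m I
      have hmin' : ∀ j ∈ I', m ≤ j := fun j hj => I.min'_le j (Finset.mem_of_mem_erase hj)
      have hIdecomp : I = insert m I' := by rw [hI', Finset.insert_erase hmI]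
      have hmc : m ∉ Iᶜ := by simp [hmI]
      have hvI : vI I = gg R m * vI I' := by
        conv_lhs => rw [hIdecomp]
        rw [vI_insert_min hmin' hmI']
      have hcompl : insert m Iᶜ = I'ᶜ := (Finset.compl_erase).symm
      have hk : (Iᶜ.filter (· < m)).card = (m : ℕ) := by
        have h : Iᶜ.filter (· < m) = Finset.Iio m := by
          ext j
          simp only [Finset.mem_filter, Finset.mem_compl, Finset.mem_Iio]
          exact ⟨fun h => h.2, fun h => ⟨fun hjI => absurd (I.min'_le j hjI) (not_le.2 h), h⟩⟩
        rw [h, Fin.card_Iio]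
      have hsum : ∑ i ∈ I, (i : ℕ) = (m : ℕ) + ∑ i ∈ I', (i : ℕ) := by
        rw [hIdecomp, Finset.sum_insert hmI']
      rw [hvI, reverse.map_mul, reverse_gg, mul_assoc, gg_mul_vI hmc, mul_smul_comm, hcompl,
        ih I' hsub, smul_smul, ← pow_add, hk, hsum]

lemma coord_vI (hB : Module.Basis (Finset (Fin n)) R (CliffordAlgebra (0 : QuadraticForm R (Fin n → R))))
    (hBv : ∀ I : Finset (Fin n), hB I = vI I) (K : Finset (Fin n)) :
    hB.coord Finset.univ (vI K) = if K = Finset.univ then 1 else 0 := by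
  rw [← hBv, Module.Basis.coord_apply, Module.Basis.repr_self, Finsupp.single_apply]

lemma key_coord (hB : Module.Basis (Finset (Fin n)) R
      (CliffordAlgebra (0 : QuadraticForm R (Fin n → R))))
    (hBv : ∀ I : Finset (Fin n), hB I = vI I) (I J : Finset (Fin n)) :
    hB.coord Finset.univ (reverse (vI I) * vI J) =
      if J = Iᶜ then (-1 : R) ^ (∑ i ∈ I, (i : ℕ)) else 0 := by
  by_cases hJ : J = Iᶜ
  · subst hJ
    rw [reverse_vI_mul_vI_compl, map_smul, coord_vI hB hBv, if_pos rfl, if_pos rfl,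
      smul_eq_mul, mul_one]
  · rw [if_neg hJ]
    obtain ⟨c, hc⟩ := reverse_vI_exists (R := R) I
    rw [hc, smul_mul_assoc, map_smul]
    by_cases hd : Disjoint I J
    · obtain ⟨c', hc'⟩ := vI_mul_vI_disjoint (R := R) hd
      have hIJ : I ∪ J ≠ Finset.univ := by
        intro h
        apply hJ
        apply Finset.Subset.antisymm
        · exact fun x hx => Finset.mem_compl.2 (Finset.disjoint_right.1 hd hx)
        · intro x hx
          rcases Finset.mem_union.1 (h ▸ Finset.mem_univ x) with hxI | hxJ
          · exact absurd hxI (Finset.mem_compl.1 hx)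
          · exact hxJ
      rw [hc', map_smul, coord_vI hB hBv, if_neg hIJ, smul_zero, smul_zero]
    · rw [Finset.not_disjoint_iff] at hd
      obtain ⟨i, hiI, hiJ⟩ := hd
      rw [vI_mul_vI_of_mem hiI hiJ, map_zero, smul_zero]

end Aux

theorem coord_reverse_mul {R : Type*} [CommRing R] {n : ℕ}
    (hB : Module.Basis (Finset (Fin n)) R (CliffordAlgebra (0 : QuadraticForm R (Fin n → R))))
    (hBv : ∀ I : Finset (Fin n), hB I = vI I)
    (α β : Finset (Fin n) → R) :
    hB.coord Finset.univ
      (reverse (∑ I : Finset (Fin n), α I • vI I) * ∑ J : Finset (Fin n), β J • vI J) =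
      ∑ I : Finset (Fin n), (-1 : R) ^ (∑ i ∈ I, (i : ℕ)) * α I * β Iᶜ := by
  have h1 : reverse (∑ I : Finset (Fin n), α I • vI I) =
      ∑ I : Finset (Fin n),
        α I • reverse (Q := (0 : QuadraticForm R (Fin n → R))) (vI I) := by
    rw [map_sum (reverse (Q := (0 : QuadraticForm R (Fin n → R))))
      (fun I => α I • vI I) Finset.univ]
    exact Finset.sum_congr rfl fun I _ =>
      map_smul (reverse (Q := (0 : QuadraticForm R (Fin n → R)))) (α I) (vI I)
  rw [h1, Finset.sum_mul_sum, map_sum]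
  refine Finset.sum_congr rfl fun I _ => ?_
  rw [map_sum]
  have h2 : ∀ J : Finset (Fin n),
      hB.coord Finset.univ ((α I • reverse (vI I)) * (β J • vI J)) =
        (α I * β J) * if J = Iᶜ then (-1 : R) ^ (∑ i ∈ I, (i : ℕ)) else 0 := by
    intro J
    rw [smul_mul_smul_comm, map_smul, smul_eq_mul, key_coord hB hBv]
  simp only [h2, mul_ite, mul_zero]
  rw [Finset.sum_ite_eq' Finset.univ Iᶜ, if_pos (Finset.mem_univ _)]
  ring
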